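/- Let B be a real Banach space and ξ : ℕ → B a Schauder basis of B, with coefficient functionals cᵢ. Then for every i ∈ ℕ, the coefficient map x ↦ cᵢ(x) is a continuous (bounded) linear functional on B. -/

import Mathlib

open Filter Topology

section Aux

variable {B : Type*} [NormedAddCommGroup B] [NormedSpace ℝ B]

/-- The space of Cauchy sequences of "partial sums along ξ", as a submodule of the
bounded functions `ℕ → B`. -/
def schauderSeqSpace (ξ : ℕ → B) : Submodule ℝ (BoundedContinuousFunction ℕ B) where
  carrier := {f | f 0 = 0 ∧ (∀ n, f (n + 1) - f n ∈ Submodule.span ℝ {ξ n}) ∧ CauchySeq (⇑f)}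
  zero_mem' := ⟨rfl, fun n => by simp, by exact cauchySeq_const (0 : B)⟩
  add_mem' := fun {f g} hf hg => by
    refine ⟨by simp [hf.1, hg.1], fun n => ?_, ?_⟩
    · have := Submodule.add_mem _ (hf.2.1 n) (hg.2.1 n)
      simpa [add_sub_add_comm] using this
    · have := hf.2.2.add hg.2.2
      simpa [Function.comp] using this
  smul_mem' := fun a f hf => by
    refine ⟨by simp [hf.1], fun n => ?_, ?_⟩
    · have := Submodule.smul_mem _ a (hf.2.1 n)
      simpa [smul_sub] using this
    · have := (uniformContinuous_const_smul a).comp_cauchySeq hf.2.2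
      exact this

theorem isClosed_schauderSeqSpace [CompleteSpace B] (ξ : ℕ → B) :
    IsClosed ((schauderSeqSpace ξ : Set (BoundedContinuousFunction ℕ B))) := by
  have h1 : IsClosed {f : BoundedContinuousFunction ℕ B | f 0 = 0} :=
    isClosed_eq (continuous_eval_const 0) continuous_const
  have h2 : ∀ n : ℕ, IsClosed {f : BoundedContinuousFunction ℕ B |
      f (n + 1) - f n ∈ Submodule.span ℝ {ξ n}} := fun n => by
    have hcl : IsClosed ((Submodule.span ℝ {ξ n} : Submodule ℝ B) : Set B) :=
      Submodule.closed_of_finiteDimensional _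
    exact hcl.preimage ((continuous_eval_const (n + 1)).sub
      (continuous_eval_const n))
  have h3 : IsClosed {f : BoundedContinuousFunction ℕ B | CauchySeq (⇑f)} := by
    rw [← isSeqClosed_iff_isClosed]
    intro u g hu hug
    show CauchySeq (⇑g)
    rw [Metric.cauchySeq_iff]
    intro ε hε
    obtain ⟨k, hk⟩ := (Metric.tendsto_atTop.1 hug (ε / 3) (by linarith)).imp
      (fun k hk => hk k le_rfl)
    obtain ⟨N, hN⟩ := Metric.cauchySeq_iff.1 (hu k) (ε / 3) (by linarith)
    refine ⟨N, fun m hm n hn => ?_⟩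
    have hd : dist (u k) g < ε / 3 := hk
    have e1 : dist (g m) (u k m) ≤ dist (u k) g := by
      simpa [dist_comm] using BoundedContinuousFunction.dist_coe_le_dist (f := g) (g := u k) m
    have e2 : dist (u k n) (g n) ≤ dist (u k) g := by
      simpa using BoundedContinuousFunction.dist_coe_le_dist (f := u k) (g := g) n
    have e3 := hN m hm n hn
    calc dist (g m) (g n) ≤ dist (g m) (u k m) + dist (u k m) (u k n) + dist (u k n) (g n) :=
        dist_triangle4 _ _ _ _
      _ < ε / 3 + ε / 3 + ε / 3 := by
          have t1 := lt_of_le_of_lt e1 hd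
          have t2 := lt_of_le_of_lt e2 hd
          linarith
      _ = ε := by ring
  have heq : (schauderSeqSpace ξ : Set (BoundedContinuousFunction ℕ B)) =
      {f : BoundedContinuousFunction ℕ B | f 0 = 0} ∩
        ((⋂ n, {f : BoundedContinuousFunction ℕ B |
            f (n + 1) - f n ∈ Submodule.span ℝ {ξ n}}) ∩
          {f : BoundedContinuousFunction ℕ B | CauchySeq (⇑f)}) := by
    ext f
    simp [schauderSeqSpace, Set.mem_iInter, and_assoc]
  rw [heq]
  exact h1.inter ((isClosed_iInter h2).inter h3)

/-- Every element of the sequence space is a sequence of partial sums. -/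
theorem schauderSeqSpace_repr {ξ : ℕ → B} {f : BoundedContinuousFunction ℕ B}
    (hf : f ∈ schauderSeqSpace ξ) :
    ∃ d : ℕ → ℝ, ∀ n, f n = ∑ i ∈ Finset.range n, d i • ξ i := by
  have h := hf.2.1
  choose d hd using fun n => Submodule.mem_span_singleton.1 (h n)
  refine ⟨d, fun n => ?_⟩
  induction n with
  | zero => simpa using hf.1
  | succ n ih =>
    rw [Finset.sum_range_succ, ← ih, hd n]
    abel

/-- The limit map, as a continuous linear map. -/
noncomputable def schauderLimMap [CompleteSpace B] (ξ : ℕ → B) :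
    (schauderSeqSpace ξ) →L[ℝ] B :=
  LinearMap.mkContinuous
    { toFun := fun f => limUnder atTop (⇑(f : BoundedContinuousFunction ℕ B))
      map_add' := fun f g => by
        have hf := f.2.2.2.tendsto_limUnder
        have hg := g.2.2.2.tendsto_limUnder
        have : Tendsto (⇑((f + g : schauderSeqSpace ξ) : BoundedContinuousFunction ℕ B)) atTop
            (𝓝 (limUnder atTop (⇑(f : BoundedContinuousFunction ℕ B)) +
                limUnder atTop (⇑(g : BoundedContinuousFunction ℕ B)))) := by
          have := hf.add hg
          exact this
        exact this.limUnder_eq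
      map_smul' := fun a f => by
        have hf := f.2.2.2.tendsto_limUnder
        have : Tendsto (⇑((a • f : schauderSeqSpace ξ) : BoundedContinuousFunction ℕ B)) atTop
            (𝓝 (a • limUnder atTop (⇑(f : BoundedContinuousFunction ℕ B)))) := by
          have := hf.const_smul a
          simpa using this
        exact this.limUnder_eq } 1 (by
      intro f
      have hf := f.2.2.2.tendsto_limUnder
      have hb : ∀ n : ℕ, ‖(f : BoundedContinuousFunction ℕ B) n‖ ≤ ‖f‖ := fun n =>
        BoundedContinuousFunction.norm_coe_le_norm _ n
      have := le_of_tendsto' hf.norm hb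
      simpa using this)

theorem schauderLimMap_tendsto [CompleteSpace B] (ξ : ℕ → B) (f : schauderSeqSpace ξ) :
    Tendsto (⇑(f : BoundedContinuousFunction ℕ B)) atTop (𝓝 (schauderLimMap ξ f)) :=
  f.2.2.2.tendsto_limUnder

end Aux

/-- If `ξ` is a Schauder basis of a real Banach space `B` with coefficient
functionals `c`, then each coefficient map `x ↦ c x i` is a continuous linear functional. -/
theorem schauder_coeff_continuous
    {B : Type*} [NormedAddCommGroup B] [NormedSpace ℝ B] [CompleteSpace B]
    (ξ : ℕ → B) (c : B → ℕ → ℝ)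
    (hconv : ∀ x : B,
      Tendsto (fun n => ∑ i ∈ Finset.range n, c x i • ξ i) atTop (𝓝 x))
    (huniq : ∀ (x : B) (d : ℕ → ℝ),
      Tendsto (fun n => ∑ i ∈ Finset.range n, d i • ξ i) atTop (𝓝 x) → d = c x) :
    ∀ i : ℕ, ∃ φ : B →L[ℝ] ℝ, ∀ x : B, φ x = c x i := by
  classical
  -- basic algebraic facts about `c`
  have hc0 : c 0 = 0 := by
    have : Tendsto (fun n => ∑ i ∈ Finset.range n, (0 : ℝ) • ξ i) atTop (𝓝 (0 : B)) := by
      simpa using (tendsto_const_nhds : Tendsto (fun _ : ℕ => (0 : B)) atTop (𝓝 0))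
    exact (huniq 0 0 this).symm
  have hcadd : ∀ x y : B, c (x + y) = c x + c y := by
    intro x y
    have h : Tendsto (fun n => ∑ i ∈ Finset.range n, (c x + c y) i • ξ i) atTop (𝓝 (x + y)) := by
      have := (hconv x).add (hconv y)
      simpa [add_smul, Finset.sum_add_distrib] using this
    exact (huniq _ _ h).symm
  have hcsmul : ∀ (a : ℝ) (x : B), c (a • x) = a • c x := by
    intro a x
    have h : Tendsto (fun n => ∑ i ∈ Finset.range n, (a • c x) i • ξ i) atTop (𝓝 (a • x)) := by
      have := (hconv x).const_smul a
      simpa [smul_smul, Finset.smul_sum] using this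
    exact (huniq _ _ h).symm
  have hξ : ∀ i, ξ i ≠ 0 := by
    intro i hi
    set d : ℕ → ℝ := Function.update (0 : ℕ → ℝ) i 1 with hdd
    have h : Tendsto (fun n => ∑ j ∈ Finset.range n, d j • ξ j) atTop (𝓝 (0 : B)) := by
      have hz : ∀ n, ∑ j ∈ Finset.range n, d j • ξ j = 0 := by
        intro n
        refine Finset.sum_eq_zero fun j _ => ?_
        by_cases hj : j = i
        · subst hj; simp [hi]
        · simp [hdd, Function.update_of_ne hj]
      simpa [hz] using (tendsto_const_nhds : Tendsto (fun _ : ℕ => (0 : B)) atTop (𝓝 0))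
    have := huniq 0 d h
    rw [hc0] at this
    have : d i = 0 := by rw [this]; rfl
    simp [hdd] at this
  -- the sequence space is a Banach space
  haveI : CompleteSpace (schauderSeqSpace ξ) := (isClosed_schauderSeqSpace ξ).completeSpace_coe
  set T := schauderLimMap ξ with hT
  have hker : T.ker = ⊥ := by
    rw [LinearMap.ker_eq_bot']
    intro f hf
    obtain ⟨d, hd⟩ := schauderSeqSpace_repr f.2
    have htend : Tendsto (fun n => ∑ i ∈ Finset.range n, d i • ξ i) atTop (𝓝 (0 : B)) := by
      have := schauderLimMap_tendsto ξ f
      rw [show schauderLimMap ξ f = 0 from hf] at this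
      simpa [funext hd] using this
    have hd0 : d = 0 := by rw [huniq 0 d htend, hc0]
    ext n
    simp [hd n, hd0]
  have hrange : T.range = ⊤ := by
    rw [LinearMap.range_eq_top]
    intro x
    obtain ⟨C, hC⟩ : ∃ C, ∀ n : ℕ, ‖∑ i ∈ Finset.range n, c x i • ξ i‖ ≤ C := by
      obtain ⟨C, hC⟩ := (hconv x).norm.bddAbove_range
      exact ⟨C, fun n => hC ⟨n, rfl⟩⟩
    set F : BoundedContinuousFunction ℕ B :=
      BoundedContinuousFunction.ofNormedAddCommGroup
        (fun n => ∑ i ∈ Finset.range n, c x i • ξ i)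
        continuous_of_discreteTopology C hC with hF
    have hFc : ⇑F = fun n => ∑ i ∈ Finset.range n, c x i • ξ i := rfl
    have hmem : F ∈ schauderSeqSpace ξ := by
      refine ⟨by simp [hFc], fun n => ?_, by rw [hFc]; exact (hconv x).cauchySeq⟩
      have : F (n + 1) - F n = c x n • ξ n := by
        simp [hFc, Finset.sum_range_succ]
      rw [this]
      exact Submodule.smul_mem _ _ (Submodule.mem_span_singleton_self _)
    refine ⟨⟨F, hmem⟩, ?_⟩
    have h1 := schauderLimMap_tendsto ξ ⟨F, hmem⟩
    have h2 : Tendsto (⇑F) atTop (𝓝 x) := by rw [hFc]; exact hconv x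
    exact tendsto_nhds_unique h1 h2
  set e := ContinuousLinearEquiv.ofBijective T hker hrange with he
  set S : B →L[ℝ] (schauderSeqSpace ξ) := (e.symm : B →L[ℝ] (schauderSeqSpace ξ)) with hS
  -- the inverse recovers the partial sums
  have hkey : ∀ (x : B) (n : ℕ),
      ((S x : BoundedContinuousFunction ℕ B) : ℕ → B) n =
        ∑ i ∈ Finset.range n, c x i • ξ i := by
    intro x n
    obtain ⟨d, hd⟩ := schauderSeqSpace_repr (S x).2
    have h1 := schauderLimMap_tendsto ξ (S x)
    have h2 : T (S x) = x := by
      have := ContinuousLinearEquiv.ofBijective_apply_symm_apply T hker hrange x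
      simpa [he, hS] using this
    rw [h2] at h1
    have h3 : Tendsto (fun n => ∑ i ∈ Finset.range n, d i • ξ i) atTop (𝓝 x) := by
      simpa [funext hd] using h1
    rw [hd n, huniq x d h3]
  intro i
  have hnorm : ∀ x : B, |c x i| * ‖ξ i‖ ≤ 2 * ‖S‖ * ‖x‖ := by
    intro x
    have h1 : c x i • ξ i =
        ((S x : BoundedContinuousFunction ℕ B) : ℕ → B) (i + 1) -
          ((S x : BoundedContinuousFunction ℕ B) : ℕ → B) i := by
      rw [hkey x (i + 1), hkey x i, Finset.sum_range_succ]
      abel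
    have h2 : ‖c x i • ξ i‖ ≤ 2 * ‖S x‖ := by
      rw [h1]
      have ha := BoundedContinuousFunction.norm_coe_le_norm
        ((S x : BoundedContinuousFunction ℕ B)) (i + 1)
      have hb := BoundedContinuousFunction.norm_coe_le_norm
        ((S x : BoundedContinuousFunction ℕ B)) i
      have hn : ‖(S x : BoundedContinuousFunction ℕ B)‖ = ‖S x‖ := rfl
      calc ‖_ - _‖ ≤ _ + _ := norm_sub_le _ _
        _ ≤ 2 * ‖S x‖ := by rw [← hn]; linarith
    have h3 : ‖S x‖ ≤ ‖S‖ * ‖x‖ := S.le_opNorm x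
    calc |c x i| * ‖ξ i‖ = ‖c x i • ξ i‖ := by rw [norm_smul, Real.norm_eq_abs]
      _ ≤ 2 * ‖S x‖ := h2
      _ ≤ 2 * (‖S‖ * ‖x‖) := by linarith
      _ = 2 * ‖S‖ * ‖x‖ := by ring
  have hξpos : 0 < ‖ξ i‖ := norm_pos_iff.2 (hξ i)
  refine ⟨LinearMap.mkContinuous
    { toFun := fun x => c x i
      map_add' := fun x y => by show c (x + y) i = c x i + c y i; rw [hcadd]; rfl
      map_smul' := fun a x => by show c (a • x) i = a • c x i; rw [hcsmul]; rfl }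
    (2 * ‖S‖ / ‖ξ i‖) (fun x => ?_), fun x => rfl⟩
  show ‖c x i‖ ≤ 2 * ‖S‖ / ‖ξ i‖ * ‖x‖
  rw [Real.norm_eq_abs, div_mul_eq_mul_div, le_div_iff₀ hξpos]
  calc |c x i| * ‖ξ i‖ ≤ 2 * ‖S‖ * ‖x‖ := hnorm x
    _ = 2 * ‖S‖ * ‖x‖ := rfl
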